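/- Let λ be a singular cardinal of countable cofinality (λ > cf(λ) = ℵ₀) and let 𝒜 ⊆ [λ]^λ be an independent family with |𝒜| ≤ λ. Then there exists a set I ∈ [λ]^λ with I ∉ 𝒜 such that for every B ∈ comb(𝒜) one has |B ∩ I| = |B ∖ I| = λ; in particular 𝒜 ∪ {I} is independent, so 𝒜 is not maximal. -/

import Mathlib

open Cardinal Set

namespace Stmt3

variable {α : Type}

/-- `[λ]^λ`: the subsets of the underlying set of full cardinality. -/
def bigs (α : Type) : Set (Set α) := {A : Set α | #A = #α}

/-- `comb 𝒜`: all finite boolean combinations `⋂Γ ∖ ⋃Δ` with `Γ, Δ` disjoint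
finite subfamilies of `𝒜` (with `⋂∅ = univ`). -/
def comb (𝒜 : Set (Set α)) : Set (Set α) :=
  {B | ∃ Γ Δ : Finset (Set α), ↑Γ ⊆ 𝒜 ∧ ↑Δ ⊆ 𝒜 ∧ Disjoint Γ Δ ∧
    B = (⋂ s ∈ Γ, s) \ (⋃ s ∈ Δ, s)}

/-- `𝒜 ⊆ [λ]^λ` is independent iff every finite boolean combination has full size. -/
def Indep (𝒜 : Set (Set α)) : Prop :=
  𝒜 ⊆ bigs α ∧ ∀ B ∈ comb 𝒜, #B = #α

/-- A maximal independent family: independent, and no proper superfamily is independent. -/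
def MaxIndep (𝒜 : Set (Set α)) : Prop :=
  Indep 𝒜 ∧ ∀ ℬ : Set (Set α), 𝒜 ⊂ ℬ → ¬ Indep ℬ

lemma univ_mem_comb (𝒜 : Set (Set α)) : Set.univ ∈ comb 𝒜 :=
  ⟨∅, ∅, by simp, by simp, by simp, by simp⟩

lemma mem_comb_of_mem {𝒜 : Set (Set α)} {A : Set α} (hA : A ∈ 𝒜) : A ∈ comb 𝒜 :=
  ⟨{A}, ∅, by simp [hA], by simp, by simp, by simp⟩

lemma exists_fresh_pair {lam : Cardinal} (hlam : ℵ₀ ≤ lam) {B U : Set α}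
    (hB : lam ≤ #B) (hU : #U < lam) :
    ∃ x ∈ B, ∃ y ∈ B, x ∉ U ∧ y ∉ U ∧ x ≠ y := by
  have h1 : lam ≤ #↥(B \ U) := by
    by_contra h
    push_neg at h
    have h2 : #B ≤ #↥((B \ U) ∪ U) := mk_le_mk_of_subset (fun x hx => by
      by_cases hxU : x ∈ U
      · exact Or.inr hxU
      · exact Or.inl ⟨hx, hxU⟩)
    have := h2.trans (mk_union_le _ _)
    exact absurd hB (this.trans_lt (add_lt_of_lt hlam h hU)).not_ge
  have hinf : (B \ U).Infinite := by
    rw [← Set.infinite_coe_iff]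
    exact Cardinal.infinite_iff.mpr (hlam.trans h1)
  obtain ⟨x, hx, y, hy, hxy⟩ := hinf.nontrivial
  exact ⟨x, hx.1, y, hy.1, hx.2, hy.2, hxy⟩

lemma mk_comb_le {𝒜 : Set (Set α)} {lam : Cardinal} (hlam : ℵ₀ ≤ lam)
    (h : #𝒜 ≤ lam) : #(comb 𝒜) ≤ lam := by
  classical
  set G : Finset ↥𝒜 × Finset ↥𝒜 → Set α :=
    fun p => (⋂ s ∈ p.1, (s : Set α)) \ (⋃ s ∈ p.2, (s : Set α)) with hG
  set F : Finset ↥𝒜 × Finset ↥𝒜 → ↥(comb 𝒜) :=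
    fun p => if hp : G p ∈ comb 𝒜 then ⟨G p, hp⟩ else ⟨Set.univ, univ_mem_comb 𝒜⟩ with hF
  have hsurj : Function.Surjective F := by
    rintro ⟨B, Γ, Δ, hΓ, hΔ, hdisj, rfl⟩
    have emb : ∀ (W : Finset (Set α)), ↑W ⊆ 𝒜 → {W' : Finset ↥𝒜 // W'.image Subtype.val = W} := by
      intro W hW
      refine ⟨W.attach.map ⟨fun s => ⟨s.1, hW s.2⟩, by intro a b hab; exact Subtype.ext (by have h := congrArg Subtype.val hab; exact h)⟩, ?_⟩
      ext t
      simp only [Finset.mem_image, Finset.mem_map, Finset.mem_attach, true_and,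
        Function.Embedding.coeFn_mk]
      constructor
      · rintro ⟨u, ⟨v, rfl⟩, rfl⟩; exact v.2
      · intro ht; exact ⟨⟨t, hW ht⟩, ⟨⟨t, ht⟩, rfl⟩, rfl⟩
    obtain ⟨Γ', hΓ'⟩ := emb Γ hΓ
    obtain ⟨Δ', hΔ'⟩ := emb Δ hΔ
    refine ⟨(Γ', Δ'), ?_⟩
    have hGval : G (Γ', Δ') = (⋂ s ∈ Γ, s) \ (⋃ s ∈ Δ, s) := by
      rw [hG]; dsimp only
      rw [← hΓ', ← hΔ', Finset.set_biInter_finset_image, Finset.set_biUnion_finset_image]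
    have hmem : G (Γ', Δ') ∈ comb 𝒜 := by rw [hGval]; exact ⟨Γ, Δ, hΓ, hΔ, hdisj, rfl⟩
    rw [hF]; dsimp only
    rw [dif_pos hmem]
    exact Subtype.ext hGval
  have h2 : #(comb 𝒜) ≤ #(Finset ↥𝒜 × Finset ↥𝒜) := mk_le_of_surjective hsurj
  have h3 : #(Finset ↥𝒜) ≤ lam := by
    rcases finite_or_infinite ↥𝒜 with hfin | hinf
    · haveI := Fintype.ofFinite ↥𝒜
      exact (Cardinal.lt_aleph0_of_finite _).le.trans hlam
    · rw [Cardinal.mk_finset_of_infinite]; exact h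
  refine h2.trans ?_
  have hpr : #(Finset ↥𝒜 × Finset ↥𝒜) = #(Finset ↥𝒜) * #(Finset ↥𝒜) := by
    simp [Cardinal.mk_prod]
  rw [hpr]
  calc #(Finset ↥𝒜) * #(Finset ↥𝒜) ≤ lam * lam := mul_le_mul' h3 h3
    _ = lam := Cardinal.mul_eq_self hlam

lemma exists_splitter (lam : Cardinal.{0}) (hlam : ℵ₀ ≤ lam)
    (ℱ : Set (Set lam.ord.ToType)) (hF : #ℱ ≤ lam) (hne : ℱ.Nonempty)
    (hbig : ∀ B ∈ ℱ, lam ≤ #B) :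
    ∃ I : Set lam.ord.ToType, ∀ B ∈ ℱ, lam ≤ #↥(B ∩ I) ∧ lam ≤ #↥(B \ I) := by
  classical
  have hα : #(lam.ord.ToType) = lam := by rw [Cardinal.mk_toType, Cardinal.card_ord]
  haveI : Infinite lam.ord.ToType := Cardinal.infinite_iff.mpr (by rw [hα]; exact hlam)
  have hle : #(↥ℱ × lam.ord.ToType) ≤ #(lam.ord.ToType) := by
    have h1 : #(↥ℱ × lam.ord.ToType) = #↥ℱ * #(lam.ord.ToType) := by
      simp [Cardinal.mk_prod]
    rw [h1, hα]
    calc #↥ℱ * lam ≤ lam * lam := mul_le_mul' hF le_rfl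
      _ = lam := Cardinal.mul_eq_self hlam
  obtain ⟨B0, hB0⟩ := hne
  haveI hne' : Nonempty (↥ℱ × lam.ord.ToType) := ⟨⟨⟨B0, hB0⟩, Classical.arbitrary _⟩⟩
  obtain ⟨emb⟩ := Cardinal.le_def _ _ |>.mp hle
  set e : lam.ord.ToType → ↥ℱ × lam.ord.ToType := Function.invFun emb with he_def
  have he : Function.Surjective e := Function.invFun_surjective emb.injective
  have wf : WellFounded ((· < ·) : lam.ord.ToType → lam.ord.ToType → Prop) :=
    IsWellFounded.wf
  have key : ∀ (a : lam.ord.ToType) (g : ∀ b, b < a → lam.ord.ToType × lam.ord.ToType),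
      ∃ p : lam.ord.ToType × lam.ord.ToType,
        p.1 ∈ ((e a).1 : Set lam.ord.ToType) ∧ p.2 ∈ ((e a).1 : Set lam.ord.ToType) ∧
        p.1 ≠ p.2 ∧ ∀ b (h : b < a),
          p.1 ≠ (g b h).1 ∧ p.1 ≠ (g b h).2 ∧ p.2 ≠ (g b h).1 ∧ p.2 ≠ (g b h).2 := by
    intro a g
    set U : Set lam.ord.ToType :=
      range (fun b : Iio a => (g b.1 b.2).1) ∪ range (fun b : Iio a => (g b.1 b.2).2) with hU_def
    have hU : #U < lam := by
      refine (mk_union_le _ _).trans_lt (add_lt_of_lt hlam ?_ ?_) <;>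
        exact (mk_range_le).trans_lt (Cardinal.mk_Iio_ord_toType a)
    obtain ⟨x, hxB, y, hyB, hxU, hyU, hxy⟩ :=
      exists_fresh_pair hlam (hbig _ (e a).1.2) hU
    refine ⟨(x, y), hxB, hyB, hxy, fun b hb => ⟨?_, ?_, ?_, ?_⟩⟩
    · exact fun hh => hxU (Or.inl ⟨⟨b, hb⟩, hh.symm⟩)
    · exact fun hh => hxU (Or.inr ⟨⟨b, hb⟩, hh.symm⟩)
    · exact fun hh => hyU (Or.inl ⟨⟨b, hb⟩, hh.symm⟩)
    · exact fun hh => hyU (Or.inr ⟨⟨b, hb⟩, hh.symm⟩)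
  obtain ⟨f, hf⟩ : ∃ f : lam.ord.ToType → lam.ord.ToType × lam.ord.ToType,
      ∀ a, (f a).1 ∈ ((e a).1 : Set lam.ord.ToType) ∧
        (f a).2 ∈ ((e a).1 : Set lam.ord.ToType) ∧ (f a).1 ≠ (f a).2 ∧
        ∀ b, b < a → (f a).1 ≠ (f b).1 ∧ (f a).1 ≠ (f b).2 ∧
          (f a).2 ≠ (f b).1 ∧ (f a).2 ≠ (f b).2 := by
    refine ⟨wf.fix (fun a g => (key a g).choose), fun a => ?_⟩
    rw [WellFounded.fix_eq]
    exact (key a _).choose_spec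
  have hinj1 : ∀ a b, (f a).1 = (f b).1 → a = b := by
    intro a b hab
    rcases lt_trichotomy a b with h | h | h
    · exact absurd hab.symm (((hf b).2.2.2 a h).1)
    · exact h
    · exact absurd hab (((hf a).2.2.2 b h).1)
  have hinj2 : ∀ a b, (f a).2 = (f b).2 → a = b := by
    intro a b hab
    rcases lt_trichotomy a b with h | h | h
    · exact absurd hab.symm (((hf b).2.2.2 a h).2.2.2)
    · exact h
    · exact absurd hab (((hf a).2.2.2 b h).2.2.2)
  have hxy : ∀ a b, (f a).1 ≠ (f b).2 := by
    intro a b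
    rcases lt_trichotomy a b with h | h | h
    · exact fun hh => (((hf b).2.2.2 a h).2.2.1) hh.symm
    · exact h ▸ (hf a).2.2.1
    · exact ((hf a).2.2.2 b h).2.1
  refine ⟨range (fun a => (f a).1), fun B hB => ?_⟩
  have hj : ∀ c : lam.ord.ToType, ∃ a, e a = (⟨B, hB⟩, c) := fun c => he _
  choose j hjspec using hj
  have hjinj : Function.Injective j := by
    intro c c' hcc'
    have h2 := hjspec c
    rw [hcc', hjspec c'] at h2
    exact (Prod.mk.injEq _ _ _ _ ▸ h2).2.symm
  have hmemB : ∀ c, (f (j c)).1 ∈ B ∧ (f (j c)).2 ∈ B := by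
    intro c
    have h1 := (hf (j c)).1
    have h2 := (hf (j c)).2.1
    rw [hjspec c] at h1 h2
    exact ⟨h1, h2⟩
  constructor
  · refine le_trans (le_of_eq hα.symm) ?_
    refine Cardinal.mk_le_of_injective
      (f := fun c => (⟨(f (j c)).1, (hmemB c).1, ⟨j c, rfl⟩⟩ : ↥(B ∩ range fun a => (f a).1))) ?_
    intro c c' hcc'
    exact hjinj (hinj1 _ _ (Subtype.ext_iff.mp hcc'))
  · refine le_trans (le_of_eq hα.symm) ?_
    refine Cardinal.mk_le_of_injective
      (f := fun c => (⟨(f (j c)).2, (hmemB c).2, ?_⟩ : ↥(B \ range fun a => (f a).1))) ?_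
    · rintro ⟨a, ha⟩
      exact hxy a (j c) ha
    · intro c c' hcc'
      exact hjinj (hinj2 _ _ (Subtype.ext_iff.mp hcc'))

/-- Let `λ` be singular of countable cofinality and `𝒜 ⊆ [λ]^λ` independent with
`|𝒜| ≤ λ`.  Then there is `I ∈ [λ]^λ`, `I ∉ 𝒜`, splitting every `B ∈ comb 𝒜`;
in particular `𝒜 ∪ {I}` is independent and `𝒜` is not maximal. -/
theorem stmt3 (lam : Cardinal) (hcof : lam.ord.cof = ℵ₀) (hsing : ℵ₀ < lam)
    (𝒜 : Set (Set lam.ord.ToType)) (hind : Indep 𝒜) (hcard : #𝒜 ≤ lam) :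
    ∃ I : Set lam.ord.ToType,
      #I = #lam.ord.ToType ∧ I ∉ 𝒜 ∧
      (∀ B ∈ comb 𝒜, #↥(B ∩ I) = #lam.ord.ToType ∧ #↥(B \ I) = #lam.ord.ToType) ∧
      Indep (𝒜 ∪ {I}) ∧ ¬ MaxIndep 𝒜 := by
  classical
  have hlam : ℵ₀ ≤ lam := hsing.le
  have hα : #(lam.ord.ToType) = lam := by rw [Cardinal.mk_toType, Cardinal.card_ord]
  have hFle : #(comb 𝒜) ≤ lam := mk_comb_le hlam hcard
  have hbig : ∀ B ∈ comb 𝒜, lam ≤ #B := fun B hB =>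
    le_of_eq ((hind.2 B hB).trans hα).symm
  obtain ⟨I, hI⟩ := exists_splitter lam hlam (comb 𝒜) hFle ⟨Set.univ, univ_mem_comb 𝒜⟩ hbig
  have hsplit : ∀ B ∈ comb 𝒜,
      #↥(B ∩ I) = #lam.ord.ToType ∧ #↥(B \ I) = #lam.ord.ToType := by
    intro B hB
    obtain ⟨h1, h2⟩ := hI B hB
    constructor
    · exact le_antisymm (Cardinal.mk_set_le _) (by rw [hα]; exact h1)
    · exact le_antisymm (Cardinal.mk_set_le _) (by rw [hα]; exact h2)
  have hIfull : #I = #lam.ord.ToType := by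
    have h := (hsplit Set.univ (univ_mem_comb 𝒜)).1
    rwa [Set.univ_inter] at h
  have hInotmem : I ∉ 𝒜 := by
    intro hmem
    have h := (hsplit I (mem_comb_of_mem hmem)).2
    rw [Set.diff_self, Cardinal.mk_emptyCollection] at h
    exact (aleph0_pos.trans_le hlam).ne' ((h.trans hα).symm)
  have hindep : Indep (𝒜 ∪ {I}) := by
    constructor
    · rintro A (hA | hA)
      · exact hind.1 hA
      · rw [Set.mem_singleton_iff] at hA
        simp only [bigs, Set.mem_setOf_eq]
        rw [hA]; exact hIfull
    · rintro B ⟨Γ, Δ, hΓ, hΔ, hdisj, rfl⟩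
      by_cases hIΓ : I ∈ Γ
      · have hIΔ : I ∉ Δ := Finset.disjoint_left.mp hdisj hIΓ
        have hΓ' : ↑(Γ.erase I) ⊆ 𝒜 := by
          intro s hs
          rcases hΓ (Finset.mem_coe.mpr (Finset.mem_of_mem_erase (Finset.mem_coe.mp hs))) with h | h
          · exact h
          · exact absurd (Set.mem_singleton_iff.mp h) (Finset.ne_of_mem_erase (Finset.mem_coe.mp hs))
        have hΔ' : ↑Δ ⊆ 𝒜 := by
          intro s hs
          rcases hΔ hs with h | h
          · exact h
          · rw [Set.mem_singleton_iff.mp h] at hs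
            exact absurd (Finset.mem_coe.mp hs) hIΔ
        have hcombB : ((⋂ s ∈ Γ.erase I, s) \ ⋃ s ∈ Δ, s) ∈ comb 𝒜 :=
          ⟨Γ.erase I, Δ, hΓ', hΔ', hdisj.mono_left (Finset.erase_subset _ _), rfl⟩
        have hform : ((⋂ s ∈ Γ, s) \ ⋃ s ∈ Δ, s) = ((⋂ s ∈ Γ.erase I, s) \ ⋃ s ∈ Δ, s) ∩ I := by
          have h1 : (⋂ s ∈ Γ, s) = I ∩ ⋂ s ∈ Γ.erase I, s := by
            conv_lhs => rw [← Finset.insert_erase hIΓ]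
            rw [Finset.set_biInter_insert]
          rw [h1]
          ext z
          simp only [Set.mem_inter_iff, Set.mem_diff]
          tauto
        rw [hform]
        exact (hsplit _ hcombB).1
      · by_cases hIΔ : I ∈ Δ
        · have hΓ' : ↑Γ ⊆ 𝒜 := by
            intro s hs
            rcases hΓ hs with h | h
            · exact h
            · rw [Set.mem_singleton_iff.mp h] at hs
              exact absurd (Finset.mem_coe.mp hs) hIΓ
          have hΔ' : ↑(Δ.erase I) ⊆ 𝒜 := by
            intro s hs
            rcases hΔ (Finset.mem_coe.mpr (Finset.mem_of_mem_erase (Finset.mem_coe.mp hs))) with h | h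
            · exact h
            · exact absurd (Set.mem_singleton_iff.mp h) (Finset.ne_of_mem_erase (Finset.mem_coe.mp hs))
          have hcombB : ((⋂ s ∈ Γ, s) \ ⋃ s ∈ Δ.erase I, s) ∈ comb 𝒜 :=
            ⟨Γ, Δ.erase I, hΓ', hΔ', hdisj.mono_right (Finset.erase_subset _ _), rfl⟩
          have hform : ((⋂ s ∈ Γ, s) \ ⋃ s ∈ Δ, s) = ((⋂ s ∈ Γ, s) \ ⋃ s ∈ Δ.erase I, s) \ I := by
            have h1 : (⋃ s ∈ Δ, s) = I ∪ ⋃ s ∈ Δ.erase I, s := by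
              conv_lhs => rw [← Finset.insert_erase hIΔ]
              rw [Finset.set_biUnion_insert]
            rw [h1]
            ext z
            simp only [Set.mem_diff, Set.mem_union]
            tauto
          rw [hform]
          exact (hsplit _ hcombB).2
        · have hΓ' : ↑Γ ⊆ 𝒜 := by
            intro s hs
            rcases hΓ hs with h | h
            · exact h
            · rw [Set.mem_singleton_iff.mp h] at hs
              exact absurd (Finset.mem_coe.mp hs) hIΓ
          have hΔ' : ↑Δ ⊆ 𝒜 := by
            intro s hs
            rcases hΔ hs with h | h
            · exact h
            · rw [Set.mem_singleton_iff.mp h] at hs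
              exact absurd (Finset.mem_coe.mp hs) hIΔ
          exact hind.2 _ ⟨Γ, Δ, hΓ', hΔ', hdisj, rfl⟩
  refine ⟨I, hIfull, hInotmem, hsplit, hindep, ?_⟩
  intro hmax
  exact hmax.2 (𝒜 ∪ {I})
    ((Set.ssubset_iff_of_subset Set.subset_union_left).mpr
      ⟨I, Set.mem_union_right _ rfl, hInotmem⟩) hindep


end Stmt3
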